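/- arXiv:0710.3194 — 5 statements merged into one kernel-verified Lean document; each statement's English description precedes it below -/
import Mathlib

section
/- Let n ≥ 3 and let λ₁, …, λₙ be real numbers with Σᵢ λᵢ = 0 and Σᵢ λᵢ² = 1. Then (Σᵢ λᵢ³)² ≤ (n-2)²/(n(n-1)). -/
lemma cubic_aux (n : ℕ) (hn : 3 ≤ n) (lam : Fin n → ℝ)
    (h1 : ∑ i, lam i = 0) (h2 : ∑ i, (lam i) ^ 2 = 1) :
    ∑ i, (lam i) ^ 3 ≤ ((n : ℝ) - 2) * Real.sqrt (1 / ((n : ℝ) * ((n : ℝ) - 1))) := by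
  have hn3 : (3 : ℝ) ≤ (n : ℝ) := by exact_mod_cast hn
  have hpos : (0 : ℝ) < (n : ℝ) * ((n : ℝ) - 1) := by nlinarith
  set α := Real.sqrt (1 / ((n : ℝ) * ((n : ℝ) - 1))) with hα
  have hαnn : 0 ≤ α := Real.sqrt_nonneg _
  have hα2 : α ^ 2 = 1 / ((n : ℝ) * ((n : ℝ) - 1)) := Real.sq_sqrt (by positivity)
  have hα2' : (n : ℝ) * ((n : ℝ) - 1) * α ^ 2 = 1 := by
    rw [hα2]; field_simp; exact div_self (ne_of_gt (by linarith))
  -- each lam i ≤ (n-1) * α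
  have hbound : ∀ i, lam i ≤ ((n : ℝ) - 1) * α := by
    intro i
    have hsplit : lam i + ∑ j ∈ Finset.univ.erase i, lam j = 0 := by
      rw [← Finset.add_sum_erase _ _ (Finset.mem_univ i)] at h1; exact h1
    have hsplit2 : (lam i) ^ 2 + ∑ j ∈ Finset.univ.erase i, (lam j) ^ 2 = 1 := by
      rw [← Finset.add_sum_erase _ (fun j => (lam j)^2) (Finset.mem_univ i)] at h2; exact h2
    have hcs : (∑ j ∈ Finset.univ.erase i, lam j) ^ 2 ≤
        ((Finset.univ.erase i).card : ℝ) * ∑ j ∈ Finset.univ.erase i, (lam j) ^ 2 := by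
      exact sq_sum_le_card_mul_sum_sq
    have hcard : ((Finset.univ.erase i).card : ℝ) = (n : ℝ) - 1 := by
      rw [Finset.card_erase_of_mem (Finset.mem_univ i), Finset.card_univ, Fintype.card_fin]
      have : 1 ≤ n := by omega
      push_cast [Nat.cast_sub this]
      ring
    rw [hcard] at hcs
    have heq : ∑ j ∈ Finset.univ.erase i, lam j = - lam i := by linarith
    rw [heq] at hcs
    -- hcs : (-lam i)^2 ≤ (n-1) * (1 - lam i^2)
    have hsq : (n : ℝ) * (lam i) ^ 2 ≤ (n : ℝ) - 1 := by nlinarith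
    -- ((n-1)α)^2 = (n-1)/n, so n * ((n-1)α)^2 = n - 1
    have hβ : (n : ℝ) * (((n : ℝ) - 1) * α) ^ 2 = (n : ℝ) - 1 := by
      have : (n : ℝ) * (((n : ℝ) - 1) * α) ^ 2
          = ((n : ℝ) - 1) * ((n : ℝ) * ((n : ℝ) - 1) * α ^ 2) := by ring
      rw [this, hα2']; ring
    nlinarith [sq_nonneg (lam i - ((n:ℝ) - 1) * α), sq_nonneg (lam i + ((n:ℝ) - 1) * α),
      mul_nonneg (sub_nonneg.2 hn3) hαnn]
  -- pointwise nonpositivity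
  have hpt : ∀ i, (lam i + α) ^ 2 * (lam i - ((n : ℝ) - 1) * α) ≤ 0 := fun i =>
    mul_nonpos_of_nonneg_of_nonpos (sq_nonneg _) (sub_nonpos.2 (hbound i))
  have hsum : ∑ i, (lam i + α) ^ 2 * (lam i - ((n : ℝ) - 1) * α) ≤ 0 :=
    Finset.sum_nonpos fun i _ => hpt i
  have hexp : ∑ i, (lam i + α) ^ 2 * (lam i - ((n : ℝ) - 1) * α)
      = (∑ i, (lam i) ^ 3) + (3 - (n : ℝ)) * α * (∑ i, (lam i) ^ 2)
        + (α ^ 2 - 2 * ((n : ℝ) - 1) * α ^ 2) * (∑ i, lam i)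
        - (n : ℝ) * (((n : ℝ) - 1) * α ^ 3) := by
    rw [Finset.mul_sum, Finset.mul_sum]
    rw [← Finset.sum_add_distrib, ← Finset.sum_add_distrib]
    have hcst : ∑ _i : Fin n, (((n : ℝ) - 1) * α ^ 3) = (n : ℝ) * (((n : ℝ) - 1) * α ^ 3) := by
      rw [Finset.sum_const, Finset.card_univ, Fintype.card_fin, nsmul_eq_mul]
    rw [← hcst, ← Finset.sum_sub_distrib]
    exact Finset.sum_congr rfl fun i _ => by ring
  rw [hexp, h1, h2] at hsum
  have hcube : (n : ℝ) * (((n : ℝ) - 1) * α ^ 3) = α := by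
    have : (n : ℝ) * (((n : ℝ) - 1) * α ^ 3) = ((n : ℝ) * ((n : ℝ) - 1) * α ^ 2) * α := by ring
    rw [this, hα2', one_mul]
  rw [hcube] at hsum
  nlinarith [hsum]

theorem cubic_power_sum_bound (n : ℕ) (hn : 3 ≤ n) (lam : Fin n → ℝ)
    (h1 : ∑ i, lam i = 0) (h2 : ∑ i, (lam i) ^ 2 = 1) :
    (∑ i, (lam i) ^ 3) ^ 2 ≤ ((n : ℝ) - 2) ^ 2 / ((n : ℝ) * ((n : ℝ) - 1)) := by
  have hn3 : (3 : ℝ) ≤ (n : ℝ) := by exact_mod_cast hn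
  have hpos : (0 : ℝ) < (n : ℝ) * ((n : ℝ) - 1) := by nlinarith
  have hα2 : (Real.sqrt (1 / ((n : ℝ) * ((n : ℝ) - 1)))) ^ 2
      = 1 / ((n : ℝ) * ((n : ℝ) - 1)) := Real.sq_sqrt (by positivity)
  have hup := cubic_aux n hn lam h1 h2
  have hneg1 : ∑ i, (-lam ·) i = 0 := by simpa using congrArg Neg.neg h1
  have hneg2 : ∑ i, ((-lam ·) i) ^ 2 = 1 := by simpa using h2
  have hlo := cubic_aux n hn (-lam ·) hneg1 hneg2
  have hlo' : -(∑ i, (lam i) ^ 3) ≤ ((n : ℝ) - 2) * Real.sqrt (1 / ((n : ℝ) * ((n : ℝ) - 1))) := by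
    have : ∑ i, ((-lam ·) i) ^ 3 = -(∑ i, (lam i) ^ 3) := by
      rw [← Finset.sum_neg_distrib]
      exact Finset.sum_congr rfl fun i _ => by ring
    rwa [this] at hlo
  have hsq := sq_le_sq' (by linarith) hup
  calc (∑ i, (lam i) ^ 3) ^ 2
      ≤ (((n : ℝ) - 2) * Real.sqrt (1 / ((n : ℝ) * ((n : ℝ) - 1)))) ^ 2 := hsq
    _ = ((n : ℝ) - 2) ^ 2 / ((n : ℝ) * ((n : ℝ) - 1)) := by
        rw [mul_pow, hα2]; field_simp
end

section
/- Let n ≥ 3 and let λ₁, …, λₙ be real numbers with Σᵢ λᵢ = 0. Then (Σᵢ λᵢ³)² ≤ ((n-2)²/(n(n-1))) · (Σᵢ λᵢ²)³. -/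
private lemma cubic_aux_sum_le (n : ℕ) (hn : 3 ≤ n) (lam : Fin n → ℝ)
    (h1 : ∑ i, lam i = 0) (B : ℝ) (hB : 0 ≤ B)
    (hp : ∑ i, (lam i) ^ 2 = (n : ℝ) * ((n : ℝ) - 1) * B ^ 2) :
    ∑ i, (lam i) ^ 3 ≤ (n : ℝ) * ((n : ℝ) - 1) * ((n : ℝ) - 2) * B ^ 3 := by
  have hn3 : (3 : ℝ) ≤ (n : ℝ) := by exact_mod_cast hn
  set M : ℝ := ((n : ℝ) - 1) * B with hM
  have hMnn : 0 ≤ M := by nlinarith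
  -- each lam i ≤ M
  have hle : ∀ i, lam i ≤ M := by
    intro i
    have hcs := sq_sum_le_card_mul_sum_sq (s := (Finset.univ.erase i)) (f := lam)
    have hcard : ((Finset.univ.erase i).card : ℝ) = (n : ℝ) - 1 := by
      rw [Finset.card_erase_of_mem (Finset.mem_univ i)]
      simp
      have : 1 ≤ n := by omega
      push_cast [Nat.cast_sub this]
      ring
    have hsum : ∑ j ∈ Finset.univ.erase i, lam j = -lam i := by
      have := Finset.sum_erase_add Finset.univ lam (Finset.mem_univ i)
      linarith
    have hsumsq : ∑ j ∈ Finset.univ.erase i, (lam j) ^ 2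
        = (∑ j, (lam j) ^ 2) - (lam i) ^ 2 := by
      rw [← Finset.sum_erase_add Finset.univ _ (Finset.mem_univ i)]
      ring
    rw [hsum, hsumsq] at hcs
    rw [hcard] at hcs
    rw [hp] at hcs
    have hnpos : (0 : ℝ) < (n : ℝ) := by linarith
    have h2 : (n : ℝ) * (lam i) ^ 2 ≤ (n : ℝ) * (((n : ℝ) - 1) * B) ^ 2 := by
      nlinarith [hcs]
    have hsq : (lam i) ^ 2 ≤ M ^ 2 := by
      rw [hM]
      exact le_of_mul_le_mul_left h2 hnpos
    nlinarith [sq_nonneg (lam i - M), sq_nonneg (lam i + M)]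
  -- tangent cubic bound
  have hpt : ∀ i, (lam i) ^ 3
      ≤ (M - 2 * B) * (lam i) ^ 2 + (2 * M * B - B ^ 2) * (lam i) + M * B ^ 2 := by
    intro i
    nlinarith [mul_nonneg (sub_nonneg.mpr (hle i)) (sq_nonneg (lam i + B))]
  have hsum3 : ∑ i, (lam i) ^ 3
      ≤ ∑ i, ((M - 2 * B) * (lam i) ^ 2 + (2 * M * B - B ^ 2) * (lam i) + M * B ^ 2) :=
    Finset.sum_le_sum fun i _ => hpt i
  have hrhs : ∑ i, ((M - 2 * B) * (lam i) ^ 2 + (2 * M * B - B ^ 2) * (lam i) + M * B ^ 2)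
      = (M - 2 * B) * (∑ i, (lam i) ^ 2) + (2 * M * B - B ^ 2) * (∑ i, lam i)
        + (n : ℝ) * (M * B ^ 2) := by
    rw [Finset.sum_add_distrib, Finset.sum_add_distrib, ← Finset.mul_sum, ← Finset.mul_sum,
      Finset.sum_const, Finset.card_univ, Fintype.card_fin, nsmul_eq_mul]
  rw [hrhs, h1, hp, hM] at hsum3
  have heq : (((n : ℝ) - 1) * B - 2 * B) * ((n : ℝ) * ((n : ℝ) - 1) * B ^ 2)
      + (2 * (((n : ℝ) - 1) * B) * B - B ^ 2) * 0 + (n : ℝ) * ((((n : ℝ) - 1) * B) * B ^ 2)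
      = (n : ℝ) * ((n : ℝ) - 1) * ((n : ℝ) - 2) * B ^ 3 := by ring
  linarith [hsum3, heq.le, heq.ge]

theorem cubic_power_sum_bound_homogeneous (n : ℕ) (hn : 3 ≤ n) (lam : Fin n → ℝ)
    (h1 : ∑ i, lam i = 0) :
    (∑ i, (lam i) ^ 3) ^ 2 ≤
      (((n : ℝ) - 2) ^ 2 / ((n : ℝ) * ((n : ℝ) - 1))) * (∑ i, (lam i) ^ 2) ^ 3 := by
  have hn3 : (3 : ℝ) ≤ (n : ℝ) := by exact_mod_cast hn
  set p : ℝ := ∑ i, (lam i) ^ 2 with hpdef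
  have hp0 : 0 ≤ p := Finset.sum_nonneg fun i _ => sq_nonneg _
  have hd : 0 < (n : ℝ) * ((n : ℝ) - 1) := by nlinarith
  set B : ℝ := Real.sqrt (p / ((n : ℝ) * ((n : ℝ) - 1))) with hBdef
  have hB : 0 ≤ B := Real.sqrt_nonneg _
  have hB2 : B ^ 2 = p / ((n : ℝ) * ((n : ℝ) - 1)) := by
    rw [hBdef, sq, Real.mul_self_sqrt (by positivity)]
  have hp : p = (n : ℝ) * ((n : ℝ) - 1) * B ^ 2 := by
    rw [hB2]; field_simp
    rw [mul_div_cancel_right₀ _ (show (n : ℝ) - 1 ≠ 0 by linarith)]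
  have h1' : ∑ i, (fun i => -lam i) i = 0 := by simpa using h1
  have hp' : ∑ i, ((fun i => -lam i) i) ^ 2 = (n : ℝ) * ((n : ℝ) - 1) * B ^ 2 := by
    simpa using hp
  have hub := cubic_aux_sum_le n hn lam h1 B hB hp
  have hlb := cubic_aux_sum_le n hn (fun i => -lam i) h1' B hB hp'
  have hlb' : -((n : ℝ) * ((n : ℝ) - 1) * ((n : ℝ) - 2) * B ^ 3) ≤ ∑ i, (lam i) ^ 3 := by
    have : ∑ i, ((fun i => -lam i) i) ^ 3 = -∑ i, (lam i) ^ 3 := by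
      rw [← Finset.sum_neg_distrib]
      exact Finset.sum_congr rfl fun i _ => by ring
    rw [this] at hlb
    linarith
  have hsq : (∑ i, (lam i) ^ 3) ^ 2 ≤ ((n : ℝ) * ((n : ℝ) - 1) * ((n : ℝ) - 2) * B ^ 3) ^ 2 :=
    sq_le_sq' hlb' hub
  have hrhs : (((n : ℝ) - 2) ^ 2 / ((n : ℝ) * ((n : ℝ) - 1))) * p ^ 3
      = ((n : ℝ) * ((n : ℝ) - 1) * ((n : ℝ) - 2) * B ^ 3) ^ 2 := by
    rw [hp]
    field_simp
  rw [hrhs]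
  exact hsq
end

section
/- Let n ≥ 3, let λ₁, …, λₙ be real numbers with Σᵢ λᵢ = 0, and let S be any real number. Then f(S, λ) := (1/(n(n-1))) S² (Σᵢ λᵢ²) + (2/(n-2)) S (Σᵢ λᵢ³) + (Σᵢ λᵢ²)² ≥ 0. -/
open Finset

/-- One-sided Okumura bound: if the `lam i` sum to zero, then
`∑ lam i ^ 3 ≥ -(n-2) * a * Q` where `Q = ∑ lam i ^ 2` and `a = √(Q/(n(n-1)))`. -/
lemma okumura_one (n : ℕ) (hn : 3 ≤ n) (lam : Fin n → ℝ) (h1 : ∑ i, lam i = 0) :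
    -(((n : ℝ) - 2) * Real.sqrt ((∑ i, (lam i) ^ 2) / ((n : ℝ) * ((n : ℝ) - 1))) *
      (∑ i, (lam i) ^ 2)) ≤ ∑ i, (lam i) ^ 3 := by
  have hn3 : (3 : ℝ) ≤ (n : ℝ) := by exact_mod_cast hn
  set Q : ℝ := ∑ i, (lam i) ^ 2 with hQdef
  have hQ : 0 ≤ Q := Finset.sum_nonneg fun i _ => sq_nonneg _
  have hP : (0 : ℝ) < (n : ℝ) * ((n : ℝ) - 1) := by nlinarith
  set a : ℝ := Real.sqrt (Q / ((n : ℝ) * ((n : ℝ) - 1))) with hadef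
  have ha : 0 ≤ a := Real.sqrt_nonneg _
  have ha2 : a ^ 2 = Q / ((n : ℝ) * ((n : ℝ) - 1)) := Real.sq_sqrt (by positivity)
  have ha2' : (n : ℝ) * ((n : ℝ) - 1) * a ^ 2 = Q := by
    rw [ha2]; field_simp [show (n : ℝ) - 1 ≠ 0 by linarith]
  -- pointwise lower bound: lam i ≥ -(n-1) a
  have hpt : ∀ i, -(((n : ℝ) - 1) * a) ≤ lam i := by
    intro i
    have hcs := sq_sum_le_card_mul_sum_sq (s := (univ : Finset (Fin n)).erase i)
      (f := lam)
    have hcard : (((univ : Finset (Fin n)).erase i).card : ℝ) = (n : ℝ) - 1 := by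
      rw [Finset.card_erase_of_mem (Finset.mem_univ i), Finset.card_univ, Fintype.card_fin]
      have : 1 ≤ n := by omega
      push_cast [Nat.cast_sub this]
      ring
    have hsum_erase : ∑ j ∈ (univ : Finset (Fin n)).erase i, lam j = -lam i := by
      have := Finset.add_sum_erase (univ : Finset (Fin n)) lam (Finset.mem_univ i)
      linarith [h1 ▸ this]
    have hsq_erase : ∑ j ∈ (univ : Finset (Fin n)).erase i, (lam j) ^ 2 = Q - (lam i) ^ 2 := by
      have := Finset.add_sum_erase (univ : Finset (Fin n)) (fun j => (lam j) ^ 2)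
        (Finset.mem_univ i)
      simp only [← hQdef] at this ⊢
      linarith [this]
    rw [hsum_erase, hsq_erase, hcard] at hcs
    have hb : (lam i) ^ 2 ≤ (((n : ℝ) - 1) * a) ^ 2 := by
      have : ((n : ℝ) - 1) ^ 2 * a ^ 2 = ((n : ℝ) - 1) / (n : ℝ) * Q := by
        rw [ha2]; field_simp
      nlinarith
    nlinarith [sq_nonneg (lam i + ((n : ℝ) - 1) * a), mul_nonneg (sub_nonneg.mpr hn3) ha]
  -- sum of nonnegative terms
  have hterm : ∀ i ∈ (univ : Finset (Fin n)),
      (0 : ℝ) ≤ (lam i + ((n : ℝ) - 1) * a) * (lam i - a) ^ 2 := by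
    intro i _
    exact mul_nonneg (by linarith [hpt i]) (sq_nonneg _)
  have hsum := Finset.sum_nonneg hterm
  have hexpand : ∑ i, (lam i + ((n : ℝ) - 1) * a) * (lam i - a) ^ 2
      = (∑ i, (lam i) ^ 3) + ((n : ℝ) - 3) * a * Q
        + ((3 : ℝ) - 2 * (n : ℝ)) * a ^ 2 * (∑ i, lam i) + (n : ℝ) * (((n : ℝ) - 1) * a ^ 3) := by
    have : ∀ i, (lam i + ((n : ℝ) - 1) * a) * (lam i - a) ^ 2
        = (lam i) ^ 3 + ((n : ℝ) - 3) * a * (lam i) ^ 2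
          + ((3 : ℝ) - 2 * (n : ℝ)) * a ^ 2 * lam i + ((n : ℝ) - 1) * a ^ 3 := by
      intro i; ring
    rw [Finset.sum_congr rfl fun i _ => this i]
    rw [Finset.sum_add_distrib, Finset.sum_add_distrib, Finset.sum_add_distrib,
      ← Finset.mul_sum, ← Finset.mul_sum, Finset.sum_const, Finset.card_univ,
      Fintype.card_fin, nsmul_eq_mul]
  rw [hexpand, h1] at hsum
  have hcube : (n : ℝ) * (((n : ℝ) - 1) * a ^ 3) = a * Q := by
    have : a ^ 3 = a ^ 2 * a := by ring
    rw [this, ← ha2']; ring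
  nlinarith [hsum, hcube]

lemma okumura (n : ℕ) (hn : 3 ≤ n) (lam : Fin n → ℝ) (h1 : ∑ i, lam i = 0) :
    (∑ i, (lam i) ^ 3) ^ 2 * ((n : ℝ) * ((n : ℝ) - 1))
      ≤ ((n : ℝ) - 2) ^ 2 * (∑ i, (lam i) ^ 2) ^ 3 := by
  have hn3 : (3 : ℝ) ≤ (n : ℝ) := by exact_mod_cast hn
  set Q : ℝ := ∑ i, (lam i) ^ 2 with hQdef
  have hQ : 0 ≤ Q := Finset.sum_nonneg fun i _ => sq_nonneg _
  have hP : (0 : ℝ) < (n : ℝ) * ((n : ℝ) - 1) := by nlinarith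
  set a : ℝ := Real.sqrt (Q / ((n : ℝ) * ((n : ℝ) - 1))) with hadef
  have ha : 0 ≤ a := Real.sqrt_nonneg _
  have ha2 : a ^ 2 = Q / ((n : ℝ) * ((n : ℝ) - 1)) := Real.sq_sqrt (by positivity)
  have ha2' : (n : ℝ) * ((n : ℝ) - 1) * a ^ 2 = Q := by
    rw [ha2]; field_simp [show (n : ℝ) - 1 ≠ 0 by linarith]
  have hlow := okumura_one n hn lam h1
  have hhigh := okumura_one n hn (fun i => -lam i) (by simpa using h1)
  have e2 : ∑ i, (-lam i) ^ 2 = Q := by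
    rw [hQdef]; exact Finset.sum_congr rfl fun i _ => by ring
  have e3 : ∑ i, (-lam i) ^ 3 = -∑ i, (lam i) ^ 3 := by
    rw [← Finset.sum_neg_distrib]; exact Finset.sum_congr rfl fun i _ => by ring
  simp only [e2, e3, ← hadef] at hhigh
  have hhigh' : ∑ i, (lam i) ^ 3 ≤ ((n : ℝ) - 2) * a * Q := by linarith [hhigh]
  have hlow' : -(((n : ℝ) - 2) * a * Q) ≤ ∑ i, (lam i) ^ 3 := by
    simpa [hadef] using hlow
  have habs : (∑ i, (lam i) ^ 3) ^ 2 ≤ (((n : ℝ) - 2) * a * Q) ^ 2 := by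
    nlinarith [hlow', hhigh']
  have : (((n : ℝ) - 2) * a * Q) ^ 2 * ((n : ℝ) * ((n : ℝ) - 1)) = ((n : ℝ) - 2) ^ 2 * Q ^ 3 := by
    have : (((n : ℝ) - 2) * a * Q) ^ 2 = ((n : ℝ) - 2) ^ 2 * a ^ 2 * Q ^ 2 := by ring
    rw [this, ha2]; field_simp [show (n : ℝ) - 1 ≠ 0 by linarith]
  nlinarith [habs, hP]

theorem soliton_quadratic_nonneg (n : ℕ) (hn : 3 ≤ n) (S : ℝ) (lam : Fin n → ℝ)
    (h1 : ∑ i, lam i = 0) :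
    0 ≤ (1 / ((n : ℝ) * ((n : ℝ) - 1))) * S ^ 2 * (∑ i, (lam i) ^ 2)
        + (2 / ((n : ℝ) - 2)) * S * (∑ i, (lam i) ^ 3)
        + (∑ i, (lam i) ^ 2) ^ 2 := by
  have hn3 : (3 : ℝ) ≤ (n : ℝ) := by exact_mod_cast hn
  set Q : ℝ := ∑ i, (lam i) ^ 2 with hQdef
  set C : ℝ := ∑ i, (lam i) ^ 3 with hCdef
  have hQ : 0 ≤ Q := Finset.sum_nonneg fun i _ => sq_nonneg _
  have hP : (0 : ℝ) < (n : ℝ) * ((n : ℝ) - 1) := by nlinarith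
  have hD : (0 : ℝ) < (n : ℝ) - 2 := by linarith
  have hok : C ^ 2 * ((n : ℝ) * ((n : ℝ) - 1)) ≤ ((n : ℝ) - 2) ^ 2 * Q ^ 3 :=
    okumura n hn lam h1
  set P : ℝ := (n : ℝ) * ((n : ℝ) - 1) with hPdef
  set D : ℝ := (n : ℝ) - 2 with hDdef
  have key : 0 ≤ Q * S ^ 2 * D ^ 2 + 2 * S * C * P * D + Q ^ 2 * P * D ^ 2 := by
    rcases eq_or_lt_of_le hQ with hQ0 | hQpos
    · -- Q = 0, hence all lam i = 0, hence C = 0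
      have hall : ∀ i ∈ (univ : Finset (Fin n)), (lam i) ^ 2 = 0 := by
        intro i hi
        exact (Finset.sum_eq_zero_iff_of_nonneg fun j _ => sq_nonneg (lam j)).mp hQ0.symm i hi
      have hC0 : C = 0 := by
        rw [hCdef]
        apply Finset.sum_eq_zero
        intro i hi
        have := hall i hi
        have hl : lam i = 0 := by nlinarith [this]
        simp [hl]
      rw [← hQ0, hC0]; ring_nf; simp
    · nlinarith [sq_nonneg (Q * S * D + C * P), mul_pos hP (mul_pos hD hD),
        mul_le_mul_of_nonneg_right hok (le_of_lt hQpos)]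
  have heq : (1 / P) * S ^ 2 * Q + (2 / D) * S * C + Q ^ 2
      = (Q * S ^ 2 * D ^ 2 + 2 * S * C * P * D + Q ^ 2 * P * D ^ 2) / (P * D ^ 2) := by
    field_simp
  rw [heq]
  exact div_nonneg key (by positivity)
end

section
/- Let n ≥ 3 and let λ₁, …, λₙ be real numbers with Σᵢ λᵢ = 0, Σᵢ λᵢ² = 1, and Σᵢ λᵢ³ = -(n-2)/√(n(n-1)). Then, after a permutation, λᵢ = 1/√(n(n-1)) for n-1 indices and λₙ = -√((n-1)/n). -/
set_option maxHeartbeats 1000000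

theorem cubic_power_sum_rigidity (n : ℕ) (hn : 3 ≤ n) (lam : Fin n → ℝ)
    (h1 : ∑ i, lam i = 0) (h2 : ∑ i, (lam i) ^ 2 = 1)
    (h3 : ∑ i, (lam i) ^ 3 = -((n : ℝ) - 2) / Real.sqrt ((n : ℝ) * ((n : ℝ) - 1))) :
    ∃ σ : Equiv.Perm (Fin n), ∀ i : Fin n,
      lam (σ i) = if (i : ℕ) < n - 1 then 1 / Real.sqrt ((n : ℝ) * ((n : ℝ) - 1))
        else -Real.sqrt (((n : ℝ) - 1) / (n : ℝ)) := by
  have hn3 : (3 : ℝ) ≤ (n : ℝ) := by exact_mod_cast hn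
  set N : ℝ := (n : ℝ) with hNdef
  have hN0 : 0 < N := by linarith
  have hN1 : 0 < N - 1 := by linarith
  set s : ℝ := Real.sqrt (N * (N - 1)) with hsdef
  have hs0 : 0 < s := Real.sqrt_pos.mpr (by positivity)
  have hs2 : s ^ 2 = N * (N - 1) := Real.sq_sqrt (by positivity)
  set a : ℝ := 1 / s with hadef
  have ha0 : 0 < a := by positivity
  have ha2 : N * (N - 1) * a ^ 2 = 1 := by
    rw [hadef]; field_simp; linarith [hs2]
  set b : ℝ := -(N - 1) * a with hbdef
  -- pointwise lower bound: b ≤ lam i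
  have hb : ∀ i, b ≤ lam i := by
    intro i
    have hcs := sq_sum_le_card_mul_sum_sq (s := Finset.univ.erase i) (f := lam)
    have hsum1 : ∑ j ∈ Finset.univ.erase i, lam j = -lam i := by
      have h : (∑ j ∈ Finset.univ.erase i, lam j) + lam i = ∑ j, lam j :=
        Finset.sum_erase_add Finset.univ lam (Finset.mem_univ i)
      rw [h1] at h; linarith
    have hsum2 : ∑ j ∈ Finset.univ.erase i, (lam j) ^ 2 = 1 - (lam i) ^ 2 := by
      have h : (∑ j ∈ Finset.univ.erase i, (lam j) ^ 2) + (lam i) ^ 2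
          = ∑ j, (lam j) ^ 2 :=
        Finset.sum_erase_add Finset.univ (fun j => (lam j) ^ 2) (Finset.mem_univ i)
      rw [h2] at h; linarith
    have hcard : ((Finset.univ.erase i).card : ℝ) = N - 1 := by
      rw [Finset.card_erase_of_mem (Finset.mem_univ i), Finset.card_univ, Fintype.card_fin]
      have : (1:ℕ) ≤ n := by omega
      push_cast [Nat.cast_sub this]
      ring
    rw [hsum1, hsum2, hcard] at hcs
    have hl2 : N * (lam i) ^ 2 ≤ N - 1 := by nlinarith
    have hc2 : N * ((N - 1) * a) ^ 2 = N - 1 := by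
      have : N * ((N - 1) * a) ^ 2 = (N - 1) * (N * (N - 1) * a ^ 2) := by ring
      rw [this, ha2]; ring
    have hc0 : 0 < (N - 1) * a := by positivity
    have hsq : (lam i) ^ 2 ≤ ((N - 1) * a) ^ 2 := by nlinarith [hl2, hc2, hN0]
    rw [hbdef]
    nlinarith [sq_nonneg (lam i + (N - 1) * a)]
  -- sum of nonnegative terms equals zero
  have hzero : ∑ i, (lam i - a) ^ 2 * (lam i - b) = 0 := by
    have hexp : ∀ i ∈ Finset.univ, (lam i - a) ^ 2 * (lam i - b) =
        (lam i) ^ 3 + ((N - 3) * a) * (lam i) ^ 2 +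
          (a ^ 2 - 2 * (N - 1) * a ^ 2) * lam i + (N - 1) * a ^ 3 := by
      intro i _; rw [hbdef]; ring
    rw [Finset.sum_congr rfl hexp]
    rw [Finset.sum_add_distrib, Finset.sum_add_distrib, Finset.sum_add_distrib,
      ← Finset.mul_sum, ← Finset.mul_sum, Finset.sum_const, Finset.card_univ,
      Fintype.card_fin, nsmul_eq_mul, h1, h2, h3]
    rw [hadef]
    have hsne : s ≠ 0 := ne_of_gt hs0
    field_simp
    nlinarith [hs2, hs0]
  have hterm : ∀ i ∈ Finset.univ, (lam i - a) ^ 2 * (lam i - b) = 0 := by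
    rw [← Finset.sum_eq_zero_iff_of_nonneg]
    · exact hzero
    · intro i _
      exact mul_nonneg (sq_nonneg _) (by linarith [hb i])
  have hval : ∀ i, lam i = a ∨ lam i = b := by
    intro i
    rcases mul_eq_zero.mp (hterm i (Finset.mem_univ i)) with h | h
    · left; have := sq_eq_zero_iff.mp h; linarith
    · right; linarith
  -- count the indices equal to b
  classical
  set S : Finset (Fin n) := Finset.univ.filter (fun i => lam i = b) with hSdef
  have hSsum : ∑ i ∈ S, lam i = (S.card : ℝ) * b := by
    rw [Finset.sum_congr rfl (fun i hi => (Finset.mem_filter.mp hi).2),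
      Finset.sum_const, nsmul_eq_mul]
  have hScsum : ∑ i ∈ Sᶜ, lam i = ((Sᶜ).card : ℝ) * a := by
    rw [Finset.sum_congr rfl (fun i hi => ?_), Finset.sum_const, nsmul_eq_mul]
    rcases hval i with h | h
    · exact h
    · exact absurd (Finset.mem_filter.mpr ⟨Finset.mem_univ i, h⟩)
        (Finset.mem_compl.mp hi)
  have hsplit : (S.card : ℝ) * b + ((Sᶜ).card : ℝ) * a = 0 := by
    rw [← hSsum, ← hScsum, Finset.sum_add_sum_compl, h1]
  have hcards : S.card + (Sᶜ).card = n := by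
    rw [Finset.card_add_card_compl, Fintype.card_fin]
  have hcardsR : (S.card : ℝ) + ((Sᶜ).card : ℝ) = N := by
    rw [hNdef]; exact_mod_cast hcards
  have hcard1 : S.card = 1 := by
    have hab : b - a = -N * a := by rw [hbdef]; ring
    -- from hsplit: card S * b + (N - card S) * a = 0
    have : (S.card : ℝ) * (b - a) + N * a = 0 := by
      have : ((Sᶜ).card : ℝ) = N - (S.card : ℝ) := by linarith
      rw [this] at hsplit; linarith
    rw [hab] at this
    have hNa : N * a ≠ 0 := by positivity
    have : (S.card : ℝ) = 1 := by
      have h' : N * a * (1 - (S.card : ℝ)) = 0 := by linarith [this]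
      rcases mul_eq_zero.mp h' with h | h
      · exact absurd h hNa
      · linarith
    exact_mod_cast this
  obtain ⟨j, hj⟩ := Finset.card_eq_one.mp hcard1
  have hjb : lam j = b := by
    have : j ∈ S := hj ▸ Finset.mem_singleton_self j
    exact (Finset.mem_filter.mp this).2
  have hia : ∀ i, i ≠ j → lam i = a := by
    intro i hij
    rcases hval i with h | h
    · exact h
    · exfalso
      have : i ∈ S := Finset.mem_filter.mpr ⟨Finset.mem_univ i, h⟩
      rw [hj, Finset.mem_singleton] at this
      exact hij this
  -- build the permutation
  have hlast : n - 1 < n := by omega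
  set last : Fin n := ⟨n - 1, hlast⟩ with hlastdef
  refine ⟨Equiv.swap j last, fun i => ?_⟩
  have hswap_last : Equiv.swap j last last = j := Equiv.swap_apply_right j last
  have hkey : ∀ i : Fin n, Equiv.swap j last i = j ↔ i = last := by
    intro i
    constructor
    · intro h
      have := (Equiv.swap j last).injective (h.trans hswap_last.symm)
      exact this
    · intro h; rw [h]; exact hswap_last
  have hsqrt : Real.sqrt ((N - 1) / N) = (N - 1) * a := by
    have h1' : (N - 1) / N = ((N - 1) * a) ^ 2 := by
      rw [hadef]
      field_simp
      nlinarith [hs2]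
    rw [h1', Real.sqrt_sq (by positivity)]
  by_cases hi : (i : ℕ) < n - 1
  · rw [if_pos hi]
    have hine : i ≠ last := by
      intro h; rw [h] at hi; simp [hlastdef] at hi
    have : Equiv.swap j last i ≠ j := fun h => hine ((hkey i).mp h)
    rw [hia _ this, hadef]
  · rw [if_neg hi]
    have : i = last := by
      apply Fin.ext
      have := i.isLt
      simp only [hlastdef]
      omega
    rw [this, hswap_last, hjb, hbdef, hsqrt]
    ring
end

section
/- Let n ≥ 3, S > 0, and λ₁, …, λₙ real with Σᵢ λᵢ = 0. If (1/(n(n-1))) S² Σλᵢ² + (2/(n-2)) S Σλᵢ³ + (Σλᵢ²)² = 0, then either λᵢ = 0 for all i, or there is a > 0 such that (up to permutation) λᵢ = a/√(n(n-1)) for i ≤ n-1, λₙ = -a√((n-1)/n), and S = √(n(n-1))·a. -/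
set_option maxHeartbeats 1600000 in
theorem equality_case_classification (n : ℕ) (hn : 3 ≤ n) (S : ℝ) (hS : 0 < S)
    (lam : Fin n → ℝ) (h1 : ∑ i, lam i = 0)
    (heq : (1 / ((n : ℝ) * ((n : ℝ) - 1))) * S ^ 2 * (∑ i, (lam i) ^ 2)
        + (2 / ((n : ℝ) - 2)) * S * (∑ i, (lam i) ^ 3)
        + (∑ i, (lam i) ^ 2) ^ 2 = 0) :
    (∀ i, lam i = 0) ∨
      ∃ a : ℝ, 0 < a ∧ S = Real.sqrt ((n : ℝ) * ((n : ℝ) - 1)) * a ∧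
        ∃ σ : Equiv.Perm (Fin n), ∀ i : Fin n,
          lam (σ i) = if (i : ℕ) < n - 1 then a / Real.sqrt ((n : ℝ) * ((n : ℝ) - 1))
            else -a * Real.sqrt (((n : ℝ) - 1) / (n : ℝ)) := by
  classical
  by_cases hzero : ∀ i, lam i = 0
  · exact Or.inl hzero
  · right
    push_neg at hzero
    obtain ⟨i0, hi0⟩ := hzero
    have hN3 : (3:ℝ) ≤ (n:ℝ) := by exact_mod_cast hn
    set N := (n:ℝ) with hNdef
    have hN0 : 0 < N := by linarith
    have hN1 : 0 < N - 1 := by linarith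
    have hN2 : 0 < N - 2 := by linarith
    set t := ∑ i, (lam i)^2 with htdef
    set p3 := ∑ i, (lam i)^3 with hp3def
    set p4 := ∑ i, (lam i)^4 with hp4def
    have ht : 0 < t := by
      have h1' : 0 < lam i0 ^ 2 :=
        lt_of_le_of_ne (sq_nonneg _) (Ne.symm (pow_ne_zero 2 hi0))
      have h2' : lam i0 ^2 ≤ t :=
        Finset.single_le_sum (fun i _ => sq_nonneg (lam i)) (Finset.mem_univ i0)
      linarith
    -- counting
    have hcardN : ((Finset.univ : Finset (Fin n)).card : ℝ) = N := by
      simp [hNdef]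
    -- sums over erase
    have herase1 : ∀ i : Fin n, ∑ j ∈ Finset.univ.erase i, lam j = -lam i := by
      intro i
      have h := Finset.sum_erase_add Finset.univ lam (Finset.mem_univ i)
      rw [h1] at h
      linarith
    have herase2 : ∀ i : Fin n, ∑ j ∈ Finset.univ.erase i, (lam j)^2 = t - (lam i)^2 := by
      intro i
      have h := Finset.sum_erase_eq_sub (f := fun j => (lam j)^2) (Finset.mem_univ i)
      rw [← htdef] at h
      simpa using h
    have hcarderase : ∀ i : Fin n, (((Finset.univ : Finset (Fin n)).erase i).card : ℝ) = N - 1 := by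
      intro i
      rw [Finset.card_erase_of_mem (Finset.mem_univ i)]
      rw [Finset.card_univ, Fintype.card_fin]
      have : 1 ≤ n := by omega
      push_cast [Nat.cast_sub this]
      ring
    -- h_i nonneg
    have hh : ∀ i : Fin n, 0 ≤ (N-1)*t - N*(lam i)^2 := by
      intro i
      have key : (0:ℝ) ≤ ∑ j ∈ Finset.univ.erase i, ((N-1)*lam j + lam i)^2 :=
        Finset.sum_nonneg fun j _ => sq_nonneg _
      have hexp : ∑ j ∈ Finset.univ.erase i, ((N-1)*lam j + lam i)^2
          = (N-1)^2*(t - (lam i)^2) + (2*(N-1)*lam i)*(-lam i) + (N-1)*(lam i)^2 := by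
        have e : ∀ j : Fin n, ((N-1)*lam j + lam i)^2
            = (N-1)^2*(lam j)^2 + (2*(N-1)*lam i)*(lam j) + (lam i)^2 := by
          intro j; ring
        rw [Finset.sum_congr rfl fun j _ => e j]
        rw [Finset.sum_add_distrib, Finset.sum_add_distrib, ← Finset.mul_sum, ← Finset.mul_sum,
          herase1 i, herase2 i, Finset.sum_const, nsmul_eq_mul, hcarderase i]
      rw [hexp] at key
      have key2 : 0 ≤ (N-1)*((N-1)*t - N*(lam i)^2) := by nlinarith [key]
      nlinarith [key2, hN1]
    -- generic expansion helper
    have sumpoly : ∀ A B C D E : ℝ,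
        ∑ i, (A*(lam i)^4 + B*(lam i)^3 + C*(lam i)^2 + D*(lam i) + E)
          = A*p4 + B*p3 + C*t + N*E := by
      intro A B C D E
      rw [Finset.sum_add_distrib, Finset.sum_add_distrib, Finset.sum_add_distrib,
        Finset.sum_add_distrib, ← Finset.mul_sum, ← Finset.mul_sum, ← Finset.mul_sum,
        ← Finset.mul_sum, Finset.sum_const, nsmul_eq_mul, hcardN,
        ← hp4def, ← hp3def, ← htdef, h1]
      ring
    have ht' : t ≠ 0 := ne_of_gt ht
    have hN0' : N ≠ 0 := ne_of_gt hN0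
    have hNN1 : N*(N-1) ≠ 0 := ne_of_gt (mul_pos hN0 hN1)
    have hN2' : N-2 ≠ 0 := ne_of_gt hN2
    set d := -p3/((N-2)*t) with hddef
    have hdval : d*((N-2)*t) = -p3 := by
      rw [hddef]; field_simp
    have hQ1 : ∑ i, (N*t*(lam i)^2 - t^2 - N*p3*(lam i))^2
        = N^2*t^2*p4 - N*t^4 - N^2*t*p3^2 := by
      have e : ∀ i : Fin n, (N*t*(lam i)^2 - t^2 - N*p3*(lam i))^2
          = (N^2*t^2)*(lam i)^4 + (-2*N^2*t*p3)*(lam i)^3 + (N^2*p3^2 - 2*N*t^3)*(lam i)^2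
            + (2*N*t^2*p3)*(lam i) + t^4 := fun i => by ring
      rw [Finset.sum_congr rfl fun i _ => e i, sumpoly]
      ring
    have hQ2 : ∑ i, ((N-1)*t - N*(lam i)^2)*((N-2)*t*(lam i) + p3)^2
        = (N-2)^2*t^2*((N-1)*t^2 - N*p4) - N*(N-2)*t*p3^2 := by
      have e : ∀ i : Fin n, ((N-1)*t - N*(lam i)^2)*((N-2)*t*(lam i) + p3)^2
          = (-N*(N-2)^2*t^2)*(lam i)^4 + (-2*N*(N-2)*t*p3)*(lam i)^3
            + ((N-1)*(N-2)^2*t^3 - N*p3^2)*(lam i)^2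
            + (2*(N-1)*(N-2)*t^2*p3)*(lam i) + (N-1)*t*p3^2 := fun i => by ring
      rw [Finset.sum_congr rfl fun i _ => e i, sumpoly]
      ring
    have heq' : (N-2)^2*t^2*S^2 + 2*N*(N-1)*(N-2)*t*S*p3 + N*(N-1)*(N-2)^2*t^3 = 0 := by
      field_simp at heq
      linear_combination ((N-2)*t)*heq
    have key : (N-2)*t*((N-2)*t*S + N*(N-1)*p3)^2
        + N*(N-1)*(∑ i, ((N-1)*t - N*(lam i)^2)*((N-2)*t*(lam i) + p3)^2)
        + (N-1)*(N-2)^2*(∑ i, (N*t*(lam i)^2 - t^2 - N*p3*(lam i))^2) = 0 := by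
      rw [hQ1, hQ2]
      linear_combination ((N-2)*t)*heq'
    -- nonnegativity of the three pieces
    have hQ1nn : 0 ≤ ∑ i, (N*t*(lam i)^2 - t^2 - N*p3*(lam i))^2 :=
      Finset.sum_nonneg fun i _ => sq_nonneg _
    have hQ2nn : 0 ≤ ∑ i, ((N-1)*t - N*(lam i)^2)*((N-2)*t*(lam i) + p3)^2 :=
      Finset.sum_nonneg fun i _ => mul_nonneg (hh i) (sq_nonneg _)
    have hAnn : 0 ≤ (N-2)*t*((N-2)*t*S + N*(N-1)*p3)^2 :=
      mul_nonneg (mul_nonneg hN2.le ht.le) (sq_nonneg _)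
    have hc1 : 0 < N*(N-1) := mul_pos hN0 hN1
    have hc2 : 0 < (N-1)*(N-2)^2 := mul_pos hN1 (pow_pos hN2 2)
    have hBz : N*(N-1)*(∑ i, ((N-1)*t - N*(lam i)^2)*((N-2)*t*(lam i) + p3)^2) = 0 := by
      linarith [hAnn, mul_nonneg hc1.le hQ2nn, mul_nonneg hc2.le hQ1nn, key]
    have hCz : (N-1)*(N-2)^2*(∑ i, (N*t*(lam i)^2 - t^2 - N*p3*(lam i))^2) = 0 := by
      linarith [hAnn, mul_nonneg hc1.le hQ2nn, mul_nonneg hc2.le hQ1nn, key]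
    have hQ2z : ∑ i, ((N-1)*t - N*(lam i)^2)*((N-2)*t*(lam i) + p3)^2 = 0 :=
      (mul_eq_zero.mp hBz).resolve_left hNN1
    have hQ1z : ∑ i, (N*t*(lam i)^2 - t^2 - N*p3*(lam i))^2 = 0 :=
      (mul_eq_zero.mp hCz).resolve_left (ne_of_gt hc2)
    have hAz : (N-2)*t*S + N*(N-1)*p3 = 0 := by
      have hDz : (N-2)*t*((N-2)*t*S + N*(N-1)*p3)^2 = 0 := by
        linarith [hAnn, mul_nonneg hc1.le hQ2nn, mul_nonneg hc2.le hQ1nn, key]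
      have h2 : ((N-2)*t*S + N*(N-1)*p3)^2 = 0 :=
        (mul_eq_zero.mp hDz).resolve_left (ne_of_gt (mul_pos hN2 ht))
      exact pow_eq_zero_iff (by norm_num) |>.mp h2
    -- pointwise consequences
    have hroot : ∀ i, N*t*(lam i)^2 - t^2 - N*p3*(lam i) = 0 := by
      intro i
      have h0 := (Finset.sum_eq_zero_iff_of_nonneg
        (fun j (_ : j ∈ Finset.univ) => sq_nonneg (N*t*(lam j)^2 - t^2 - N*p3*(lam j)))).mp
        hQ1z i (Finset.mem_univ i)
      exact pow_eq_zero_iff (by norm_num) |>.mp h0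
    have hor : ∀ i, N*(lam i)^2 = (N-1)*t ∨ lam i = d := by
      intro i
      have h0 := (Finset.sum_eq_zero_iff_of_nonneg
        (fun j (_ : j ∈ Finset.univ) => mul_nonneg (hh j) (sq_nonneg _))).mp
        hQ2z i (Finset.mem_univ i)
      rcases mul_eq_zero.mp h0 with h|h
      · left; linarith
      · right
        have h3 : (N-2)*t*(lam i) + p3 = 0 := pow_eq_zero_iff (by norm_num) |>.mp h
        have h4 : ((N-2)*t)*(lam i - d) = 0 := by linear_combination h3 - hdval
        have h5 := (mul_eq_zero.mp h4).resolve_left (mul_ne_zero hN2' ht')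
        linarith
    -- value of S in terms of d
    have hSd : S = N*(N-1)*d := by
      have h5 : ((N-2)*t)*(S - N*(N-1)*d) = 0 := by
        linear_combination hAz - (N*(N-1))*hdval
      have h6 := (mul_eq_zero.mp h5).resolve_left (mul_ne_zero hN2' ht')
      linarith
    have hd0 : 0 < d := by
      by_contra hcon
      push_neg at hcon
      have : N*(N-1)*d ≤ 0 := mul_nonpos_of_nonneg_of_nonpos hc1.le hcon
      linarith [hSd ▸ hS]
    clear key heq heq' hQ1 hQ2 hQ1z hQ2z hBz hCz hQ1nn hQ2nn hAnn hAz hdval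
    clear hh herase1 herase2 hcarderase sumpoly
    -- all indices with lam i ≠ d share the same value
    have hBsq : ∀ i, lam i ≠ d → N*(lam i)^2 = (N-1)*t := by
      intro i hne
      exact (hor i).resolve_right hne
    have hBeq : ∀ i, lam i ≠ d → ∀ j, lam j ≠ d → lam i = lam j := by
      intro i hi j hj
      by_contra hij
      have ri := hroot i
      have rj := hroot j
      have hsum : t*(lam i + lam j) = p3 := by
        have h6 : (N*(t*(lam i + lam j) - p3))*(lam i - lam j) = 0 := by
          linear_combination ri - rj
        have h7 := (mul_eq_zero.mp h6).resolve_right (sub_ne_zero.mpr hij)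
        have h8 := (mul_eq_zero.mp h7).resolve_left hN0'
        linarith
      have hprod : N*(lam i*lam j) = -t := by
        have h8 : t*(N*(lam i*lam j) + t) = 0 := by
          linear_combination (N*lam i)*hsum - ri
        have h9 := (mul_eq_zero.mp h8).resolve_left ht'
        linarith
      have hsqi := hBsq i hi
      have hsqj := hBsq j hj
      have hopp : lam j = -lam i := by
        have h9 : (lam i - lam j)*(lam i + lam j) = 0 := by
          have h10 : N*((lam i)^2 - (lam j)^2) = 0 := by linarith
          have h11 := (mul_eq_zero.mp h10).resolve_left hN0'
          linear_combination h11
        have h12 := (mul_eq_zero.mp h9).resolve_left (sub_ne_zero.mpr hij)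
        linarith
      rw [hopp] at hprod
      nlinarith [hprod, hsqi, ht, hN2]
    -- there is some index with lam ≠ d
    have hBne : (Finset.univ.filter (fun i => ¬ lam i = d)).Nonempty := by
      rw [Finset.filter_nonempty_iff]
      by_contra hco
      push_neg at hco
      have hall : ∀ i, lam i = d := fun i => hco i (Finset.mem_univ i)
      have hsum : ∑ i, lam i = N*d := by
        rw [Finset.sum_congr rfl fun i _ => hall i, Finset.sum_const, nsmul_eq_mul, hcardN]
      rw [h1] at hsum
      nlinarith [hd0, hN0]
    obtain ⟨k, hkmem⟩ := hBne
    have hkne' : lam k ≠ d := (Finset.mem_filter.mp hkmem).2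
    -- counting
    set Qr : ℝ := ((Finset.univ.filter (fun i => ¬ lam i = d)).card : ℝ) with hQrdef
    set Pr : ℝ := ((Finset.univ.filter (fun i => lam i = d)).card : ℝ) with hPrdef
    have e4 : Pr + Qr = N := by
      rw [hPrdef, hQrdef, hNdef]
      have := Finset.card_filter_add_card_filter_not
        (s := (Finset.univ : Finset (Fin n))) (fun i => lam i = d)
      rw [Finset.card_univ, Fintype.card_fin] at this
      push_cast [← this]
      ring
    have hBval : ∀ i ∈ Finset.univ.filter (fun i => ¬ lam i = d), lam i = lam k := by
      intro i hi
      exact hBeq i (Finset.mem_filter.mp hi).2 k hkne'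
    have hPval : ∀ i ∈ Finset.univ.filter (fun i => lam i = d), lam i = d := by
      intro i hi
      exact (Finset.mem_filter.mp hi).2
    have e1 : Pr*d + Qr*(lam k) = 0 := by
      have hsp := Finset.sum_filter_add_sum_filter_not Finset.univ (fun i => lam i = d) lam
      rw [h1, Finset.sum_congr rfl hPval, Finset.sum_congr rfl hBval,
        Finset.sum_const, Finset.sum_const, nsmul_eq_mul, nsmul_eq_mul] at hsp
      rw [hPrdef, hQrdef]
      linarith
    have e2 : Pr*d^2 + Qr*(lam k)^2 = t := by
      have hsB2 : ∑ i ∈ Finset.univ.filter (fun i => ¬ lam i = d), (lam i)^2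
          = Qr*(lam k)^2 := by
        calc ∑ i ∈ Finset.univ.filter (fun i => ¬ lam i = d), (lam i)^2
            = ∑ _i ∈ Finset.univ.filter (fun i => ¬ lam i = d), (lam k)^2 :=
              Finset.sum_congr rfl (fun i hi => by rw [hBval i hi])
          _ = Qr*(lam k)^2 := by
              rw [Finset.sum_const, nsmul_eq_mul, hQrdef]
      have hsP2 : ∑ i ∈ Finset.univ.filter (fun i => lam i = d), (lam i)^2
          = Pr*d^2 := by
        calc ∑ i ∈ Finset.univ.filter (fun i => lam i = d), (lam i)^2
            = ∑ _i ∈ Finset.univ.filter (fun i => lam i = d), d^2 :=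
              Finset.sum_congr rfl (fun i hi => by rw [hPval i hi])
          _ = Pr*d^2 := by
              rw [Finset.sum_const, nsmul_eq_mul, hPrdef]
      have hsp := Finset.sum_filter_add_sum_filter_not Finset.univ
        (fun i => lam i = d) (fun i => (lam i)^2)
      rw [hsP2, hsB2, ← htdef] at hsp
      exact hsp
    have e3 : N*(lam k)^2 = (N-1)*t := hBsq k hkne'
    -- solve for Qr = 1
    have k1 : Pr*t = N*(Qr*(lam k)^2) := by
      linear_combination (-Pr)*e2 + (Qr*(lam k)^2)*e4 + (Pr*d - Qr*(lam k))*e1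
    have k2 : Pr*t = Qr*(N-1)*t := by
      linear_combination k1 + Qr*e3
    have k3 : Pr = Qr*(N-1) := by
      have h13 : (Pr - Qr*(N-1))*t = 0 := by linear_combination k2
      have h14 := (mul_eq_zero.mp h13).resolve_right ht'
      linarith
    have hQr1 : Qr = 1 := by
      have h15 : (Qr - 1)*N = 0 := by linear_combination e4 - k3
      have h16 := (mul_eq_zero.mp h15).resolve_right hN0'
      linarith
    rw [hQr1, one_mul] at k3
    -- the exceptional index is unique
    have hcard1 : (Finset.univ.filter (fun i => ¬ lam i = d)).card = 1 := by
      have : ((Finset.univ.filter (fun i => ¬ lam i = d)).card : ℝ) = (1:ℝ) := by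
        rw [← hQrdef, hQr1]
      exact_mod_cast this
    obtain ⟨k0, hk0⟩ := Finset.card_eq_one.mp hcard1
    have hkk0 : k = k0 := by
      have : k ∈ Finset.univ.filter (fun i => ¬ lam i = d) := hkmem
      rw [hk0] at this
      exact Finset.mem_singleton.mp this
    have hallne : ∀ i, i ≠ k → lam i = d := by
      intro i hik
      by_contra hco
      have hmem : i ∈ Finset.univ.filter (fun j => ¬ lam j = d) :=
        Finset.mem_filter.mpr ⟨Finset.mem_univ _, hco⟩
      rw [hk0] at hmem
      exact hik ((Finset.mem_singleton.mp hmem).trans hkk0.symm)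
    have hkval : lam k = -(N-1)*d := by
      have := e1
      rw [hQr1, k3] at this
      linarith
    -- construct the data
    have hsqpos : 0 < Real.sqrt (N*(N-1)) := Real.sqrt_pos.mpr hc1
    have hsne : Real.sqrt (N*(N-1)) ≠ 0 := ne_of_gt hsqpos
    have hdiv : Real.sqrt (N*(N-1)) * d / Real.sqrt (N*(N-1)) = d := by
      rw [mul_comm, mul_div_assoc, div_self hsne, mul_one]
    have h10 : Real.sqrt (N*(N-1)) * Real.sqrt ((N-1)/N) = N-1 := by
      rw [← Real.sqrt_mul hc1.le]
      have h11 : N*(N-1)*((N-1)/N) = (N-1)^2 := by field_simp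
      rw [h11, Real.sqrt_sq hN1.le]
    have hmul : Real.sqrt (N*(N-1)) * d * Real.sqrt ((N-1)/N) = (N-1)*d := by
      rw [mul_right_comm, h10]
    refine ⟨Real.sqrt (N*(N-1)) * d, mul_pos hsqpos hd0, ?_, ?_⟩
    · rw [hSd, ← mul_assoc, Real.mul_self_sqrt hc1.le]
    · have hm : n - 1 < n := by omega
      refine ⟨Equiv.swap ⟨n-1, hm⟩ k, fun i => ?_⟩
      by_cases hi : (i:ℕ) < n - 1
      · rw [if_pos hi]
        have him : i ≠ ⟨n-1, hm⟩ := by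
          intro h
          rw [h] at hi
          simp at hi
        by_cases hik : i = k
        · rw [hik, Equiv.swap_apply_right]
          have hmk : (⟨n-1, hm⟩ : Fin n) ≠ k := fun h => him (hik.trans h.symm)
          rw [hallne _ hmk, hdiv]
        · rw [Equiv.swap_apply_of_ne_of_ne him hik, hallne i hik, hdiv]
      · rw [if_neg hi]
        have him : i = ⟨n-1, hm⟩ := by
          apply Fin.ext
          have := i.isLt
          simp only
          omega
        rw [him, Equiv.swap_apply_left, hkval]
        linear_combination d*h10
end
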